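/- Assume 0 < r_f < 1 and r_f³ ≤ 2μ. For every α ∈ ℝ, the number C_D*(α) = G(α) − 2r_f² + 2√(2μ·r_f) satisfies the quadratic equation c² − 2(G(α) − 2r_f²)·c + (G(α)² − 4r_f²·W(α)) = 0 together with the inequality c ≥ G(α), and it is the unique real number with both properties. -/
import Mathlib


/-- The function W(α). -/
noncomputable def Wfun (μ rf α : ℝ) : ℝ :=
  (rf * Real.cos α + 1 - μ) ^ 2 + (rf * Real.sin α) ^ 2
    + 2 * (1 - μ) / Real.sqrt (1 + 2 * rf * Real.cos α + rf ^ 2)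
    + 2 * μ / rf + μ * (1 - μ)

/-- The function G(α). -/
noncomputable def Gfun (μ rf α : ℝ) : ℝ :=
  2 * rf ^ 2 + 2 * (1 - μ) * (rf * Real.cos α + 1 - μ)
    + (1 - μ) * (2 * μ - 1)
    + 2 * (1 - μ) / Real.sqrt (1 + 2 * rf * Real.cos α + rf ^ 2)

/-- Critical Jacobi energy for direct insertion. -/
noncomputable def CDstar (μ rf α : ℝ) : ℝ :=
  Gfun μ rf α - 2 * rf ^ 2 + 2 * Real.sqrt (2 * μ * rf)

theorem CDstar_root_of_quadratic_and_unique
    (μ rf : ℝ) (hμ0 : 0 < μ) (hμ1 : μ < 1) (hrf0 : 0 < rf) (hrf1 : rf < 1)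
    (hrf3 : rf ^ 3 ≤ 2 * μ) (α : ℝ) :
    ((CDstar μ rf α) ^ 2 - 2 * (Gfun μ rf α - 2 * rf ^ 2) * CDstar μ rf α
        + ((Gfun μ rf α) ^ 2 - 4 * rf ^ 2 * Wfun μ rf α) = 0
      ∧ CDstar μ rf α ≥ Gfun μ rf α)
    ∧ ∀ c : ℝ,
        (c ^ 2 - 2 * (Gfun μ rf α - 2 * rf ^ 2) * c
            + ((Gfun μ rf α) ^ 2 - 4 * rf ^ 2 * Wfun μ rf α) = 0
          ∧ c ≥ Gfun μ rf α) → c = CDstar μ rf α := by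

  have hkey : Wfun μ rf α = Gfun μ rf α - rf ^ 2 + 2 * μ / rf := by
    unfold Wfun Gfun
    linear_combination rf ^ 2 * Real.sin_sq_add_cos_sq α
  have hs : Real.sqrt (2 * μ * rf) ^ 2 = 2 * μ * rf :=
    Real.sq_sqrt (by positivity)
  have hsnn : 0 ≤ Real.sqrt (2 * μ * rf) := Real.sqrt_nonneg _
  have hle : rf ^ 2 ≤ Real.sqrt (2 * μ * rf) := by
    have h4 : rf ^ 4 ≤ 2 * μ * rf := by nlinarith
    have := Real.sqrt_le_sqrt h4
    rwa [show rf ^ 4 = (rf ^ 2) ^ 2 by ring, Real.sqrt_sq (by positivity)] at this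
  refine ⟨⟨?_, ?_⟩, ?_⟩
  · unfold CDstar
    linear_combination (4 : ℝ) * hs - 4 * rf ^ 2 * hkey + (-8 * μ * rf) * mul_inv_cancel₀ (ne_of_gt hrf0)
  · unfold CDstar
    nlinarith
  · rintro c ⟨hc, hcg⟩
    have hfac : (c - (Gfun μ rf α - 2 * rf ^ 2) - 2 * Real.sqrt (2 * μ * rf)) *
        (c - (Gfun μ rf α - 2 * rf ^ 2) + 2 * Real.sqrt (2 * μ * rf)) = 0 := by
      linear_combination hc + 4 * rf ^ 2 * hkey - 4 * hs + (8 * μ * rf) * mul_inv_cancel₀ (ne_of_gt hrf0)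
    rcases mul_eq_zero.mp hfac with h | h
    · unfold CDstar; linarith
    · exfalso; nlinarith
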